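/- Let f : ℝⁿ → ℝ be C²-smooth such that all sublevel sets f⁻¹((-∞, r]) with r ≥ q are convex (for some fixed q), and suppose the Hessian H_f(x) is positive definite at every x with f(x) > q. Then the truncation T_q(f) = max{q, f} is convex. -/

import Mathlib

open Set Filter Topology

/-- 1-D key lemma: if `h` is `C²` and `deriv (deriv h) s > 0` whenever `q < h s`, then
`max q ∘ h` satisfies the chord inequality on `[0,1]`. -/
lemma aux1d (q : ℝ) (h : ℝ → ℝ) (hh : ContDiff ℝ 2 h)
    (hpd : ∀ s : ℝ, q < h s → 0 < deriv (deriv h) s) :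
    ∀ s ∈ Set.Icc (0:ℝ) 1, max q (h s) ≤ (1 - s) * max q (h 0) + s * max q (h 1) := by
  intro s hs
  by_contra hlt
  push_neg at hlt
  set ψ : ℝ → ℝ := fun t => max q (h t) with hψdef
  set c : ℝ := ψ 1 - ψ 0 with hcdef
  set L : ℝ → ℝ := fun t => c * t + ψ 0 with hLdef
  set φ : ℝ → ℝ := fun t => ψ t - L t with hφdef
  have hψcont : Continuous ψ := continuous_const.max hh.continuous
  have hφcont : Continuous φ := by
    apply hψcont.sub
    exact (continuous_const.mul continuous_id).add continuous_const
  obtain ⟨t0, ht0mem, ht0max⟩ :=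
    isCompact_Icc.exists_isMaxOn (nonempty_Icc.mpr zero_le_one) hφcont.continuousOn
  have hφs : 0 < φ s := by
    have : L s = (1 - s) * ψ 0 + s * ψ 1 := by simp [hLdef, hcdef]; ring
    simp only [hφdef, this]
    linarith
  have hφt0 : 0 < φ t0 := lt_of_lt_of_le hφs (ht0max hs)
  have hq0 : q ≤ ψ 0 := le_max_left _ _
  have hq1 : q ≤ ψ 1 := le_max_left _ _
  have hLq : q ≤ L t0 := by
    have h1 : (0:ℝ) ≤ t0 := ht0mem.1
    have h2 : t0 ≤ 1 := ht0mem.2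
    have : L t0 = (1 - t0) * ψ 0 + t0 * ψ 1 := by simp [hLdef, hcdef]; ring
    nlinarith
  have hht0 : q < h t0 := by
    have : q < ψ t0 := by
      have : L t0 < ψ t0 := by simp only [hφdef] at hφt0; linarith
      linarith
    rcases lt_max_iff.mp this with h' | h'
    · exact absurd h' (lt_irrefl q)
    · exact h'
  have hψt0 : ψ t0 = h t0 := max_eq_right hht0.le
  have ht0ne0 : t0 ≠ 0 := by
    intro he
    have : φ 0 = 0 := by simp [hφdef, hLdef]
    rw [he] at hφt0; linarith
  have ht0ne1 : t0 ≠ 1 := by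
    intro he
    have : φ 1 = 0 := by simp [hφdef, hLdef, hcdef]
    rw [he] at hφt0; linarith
  have ht0Ioo : t0 ∈ Ioo (0:ℝ) 1 :=
    ⟨lt_of_le_of_ne ht0mem.1 (Ne.symm ht0ne0), lt_of_le_of_ne ht0mem.2 ht0ne1⟩
  set w : ℝ → ℝ := fun t => h t - L t with hwdef
  have hwmax : IsLocalMax w t0 := by
    filter_upwards [Icc_mem_nhds ht0Ioo.1 ht0Ioo.2] with t ht
    have h1 : w t ≤ φ t := by
      simp only [hwdef, hφdef]
      have : h t ≤ ψ t := le_max_right _ _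
      linarith
    have h2 : φ t ≤ φ t0 := ht0max ht
    have h3 : φ t0 = w t0 := by simp [hφdef, hwdef, hψt0]
    calc w t ≤ φ t := h1
      _ ≤ φ t0 := h2
      _ = w t0 := h3
  -- differentiability facts
  have hdiff : Differentiable ℝ h := hh.differentiable two_ne_zero
  have hderivh : ContDiff ℝ 1 (deriv h) := by
    have h2 : ContDiff ℝ ((1:WithTop ℕ∞) + 1) h := by
      rw [one_add_one_eq_two]; exact hh
    exact (contDiff_succ_iff_deriv.mp h2).2.2
  have hw : ∀ t, HasDerivAt w (deriv h t - c) t := by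
    intro t
    have h1 : HasDerivAt h (deriv h t) t := (hdiff t).hasDerivAt
    have h2 : HasDerivAt L c t := by
      have := ((hasDerivAt_id t).const_mul c).add_const (ψ 0)
      simpa [hLdef] using this
    exact h1.sub h2
  have hderivw : deriv w = fun t => deriv h t - c := funext fun t => (hw t).deriv
  have hderiv2 : HasDerivAt (deriv w) (deriv (deriv h) t0) t0 := by
    rw [hderivw]
    have : HasDerivAt (deriv h) (deriv (deriv h) t0) t0 :=
      ((hderivh.differentiable one_ne_zero) t0).hasDerivAt
    simpa using this.sub_const c
  have hpos : 0 < deriv (deriv h) t0 := hpd t0 hht0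
  have hderivw0 : deriv w t0 = 0 := hwmax.deriv_eq_zero
  -- eventually deriv w > 0 to the right of t0
  have hslope : Tendsto (slope (deriv w) t0) (𝓝[≠] t0) (𝓝 (deriv (deriv h) t0)) :=
    hasDerivAt_iff_tendsto_slope.mp hderiv2
  have hev0 : ∀ᶠ t in 𝓝[≠] t0, 0 < slope (deriv w) t0 t :=
    hslope.eventually (lt_mem_nhds hpos)
  have hmono : 𝓝[>] t0 ≤ 𝓝[≠] t0 :=
    nhdsWithin_mono t0 (fun t ht => ne_of_gt ht)
  have hev : ∀ᶠ t in 𝓝[>] t0, 0 < deriv w t := by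
    filter_upwards [hev0.filter_mono hmono, self_mem_nhdsWithin] with t hsl (ht : t0 < t)
    rw [slope_def_field, hderivw0, sub_zero] at hsl
    rcases div_pos_iff.mp hsl with ⟨h1, _⟩ | ⟨_, h2⟩
    · exact h1
    · linarith
  obtain ⟨u, hu, husub⟩ := mem_nhdsGT_iff_exists_Ioo_subset.mp hev
  have hu' : t0 < u := hu
  have hwcont : Continuous w := hh.continuous.sub
    ((continuous_const.mul continuous_id).add continuous_const)
  have hmaxright : ∀ᶠ t in 𝓝[>] t0, w t ≤ w t0 := hwmax.filter_mono nhdsWithin_le_nhds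
  have hIoo : Ioo t0 u ∈ 𝓝[>] t0 := Ioo_mem_nhdsGT_of_mem ⟨le_rfl, hu'⟩
  obtain ⟨t, hwt, htIoo⟩ := (hmaxright.and (eventually_of_mem hIoo (fun _ h => h))).exists
  have hlt' : w t0 < w t := by
    have hmono' : StrictMonoOn w (Icc t0 t) := by
      apply StrictMonoOn.mono (strictMonoOn_of_deriv_pos (convex_Icc t0 u)
        hwcont.continuousOn ?_) ?_
      · intro z hz
        rw [interior_Icc] at hz
        exact husub hz
      · exact Icc_subset_Icc le_rfl htIoo.2.le
    exact hmono' (left_mem_Icc.mpr htIoo.1.le) (right_mem_Icc.mpr htIoo.1.le) htIoo.1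
  linarith [hwt]

/-- If `f : ℝⁿ → ℝ` is `C²`, all sublevel sets `f⁻¹((-∞, r])` with `r ≥ q` are
convex, and the Hessian of `f` is positive definite at every point `x` with
`f x > q`, then the truncation `T_q(f) = max {q, f}` is convex. -/
theorem stmt_9 (n : ℕ) (f : EuclideanSpace ℝ (Fin n) → ℝ) (q : ℝ)
    (hf : ContDiff ℝ 2 f)
    (hsub : ∀ r : ℝ, q ≤ r → Convex ℝ {x | f x ≤ r})
    (hhess : ∀ x, q < f x → ∀ v : EuclideanSpace ℝ (Fin n), v ≠ 0 →
      0 < fderiv ℝ (fderiv ℝ f) x v v) :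
    ConvexOn ℝ Set.univ (fun x => max q (f x)) := by
  refine ⟨convex_univ, ?_⟩
  intro x _ y _ a b ha hb hab
  by_cases hxy : y = x
  · rw [hxy]
    have h1 : a • x + b • x = x := by rw [← add_smul, hab, one_smul]
    rw [h1]
    have h2 : a * max q (f x) + b * max q (f x) = max q (f x) := by
      rw [← add_mul, hab, one_mul]
    simp only [smul_eq_mul]
    linarith [h2.ge]
  · set v : EuclideanSpace ℝ (Fin n) := y - x with hvdef
    have hv : v ≠ 0 := sub_ne_zero.mpr hxy
    set h : ℝ → ℝ := fun s => f (x + s • v) with hhdef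
    have hγ : ∀ s : ℝ, HasDerivAt (fun s : ℝ => x + s • v) v s := by
      intro s
      have := ((hasDerivAt_id s).smul_const v).const_add x
      simpa using this
    have hhC2 : ContDiff ℝ 2 h := by
      apply hf.comp
      exact contDiff_const.add (contDiff_id.smul contDiff_const)
    have hd1 : Differentiable ℝ f := hf.differentiable two_ne_zero
    have hd2 : ContDiff ℝ 1 (fderiv ℝ f) := by
      have h2 : ContDiff ℝ ((1:WithTop ℕ∞) + 1) f := by
        rw [one_add_one_eq_two]; exact hf
      exact (contDiff_succ_iff_fderiv.mp h2).2.2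
    have hderivh : deriv h = fun s => fderiv ℝ f (x + s • v) v := by
      funext s
      exact (((hd1 (x + s • v)).hasFDerivAt).comp_hasDerivAt s (hγ s)).deriv
    have hpd : ∀ s : ℝ, q < h s → 0 < deriv (deriv h) s := by
      intro s hqs
      have h1 : HasDerivAt (fun t : ℝ => fderiv ℝ f (x + t • v))
          (fderiv ℝ (fderiv ℝ f) (x + s • v) v) s :=
        (((hd2.differentiable one_ne_zero) (x + s • v)).hasFDerivAt).comp_hasDerivAt s (hγ s)
      have h2 : HasDerivAt (fun t : ℝ => fderiv ℝ f (x + t • v) v)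
          (fderiv ℝ (fderiv ℝ f) (x + s • v) v v) s := by
        have := h1.clm_apply (hasDerivAt_const s v)
        simpa using this
      rw [hderivh]
      rw [h2.deriv]
      exact hhess (x + s • v) hqs v hv
    have key := aux1d q h hhC2 hpd b ⟨hb, by linarith⟩
    have h0 : h 0 = f x := by simp [hhdef]
    have h1 : h 1 = f y := by simp [hhdef, hvdef]
    have hb' : h b = f (a • x + b • y) := by
      have : x + b • v = a • x + b • y := by
        rw [hvdef, smul_sub]
        have : a = 1 - b := by linarith
        rw [this, sub_smul, one_smul]
        abel
      rw [hhdef]; simp only; rw [this]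
    rw [h0, h1, hb'] at key
    have : (1 : ℝ) - b = a := by linarith
    rw [this] at key
    exact key
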